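/- Let A be a real number with A < 0 and let B, C be real numbers. Then the symmetric matrices [[B+C, -C], [-C, C+A]] and [[B'+C', -C'], [-C', C'+A']] with (A', B', C') = (-A, B+2A, C+2A) are congruent over GL(2,ℤ), i.e., they represent the same lattice. -/
import Mathlib

theorem stmt_2 (A B C : ℝ) (hA : A < 0) :
    ∃ U : Matrix (Fin 2) (Fin 2) ℤ, IsUnit U.det ∧
      (U.map (Int.cast : ℤ → ℝ)).transpose * !![B + C, -C; -C, C + A] *
          U.map (Int.cast : ℤ → ℝ) =
        !![(B + 2*A) + (C + 2*A), -(C + 2*A); -(C + 2*A), (C + 2*A) + (-A)] := by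
  refine ⟨!![-1, 0; -2, 1], ?_, ?_⟩
  · simp [Matrix.det_fin_two_of]
  · ext i j
    fin_cases i <;> fin_cases j <;>
      simp [Matrix.mul_apply, Fin.sum_univ_two, Matrix.map_apply] <;> ring
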